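/- There exists a semigroup S with exactly 11 elements such that: (i) S satisfies the identity x·y·z·x·y = x·y for all x, y, z ∈ S; (ii) for all x, y ∈ S, x·y·y = x·y or y·y·x = y·x; and (iii) there exist x, y, z, u, w ∈ S with x·y·z ≠ x·y·w·z and x·y·z ≠ x·u·y·z. In other words, there is an 11-element semigroup in the class A that is not in the class I. -/
import Mathlib

def grbTable : Fin 11 → Fin 11 → Fin 11 := fun a b =>
  !![0, 1, 2, 0, 1, 2, 0, 1, 2, 0, 0;
     0, 1, 2, 0, 1, 2, 0, 1, 2, 0, 0;
     0, 1, 2, 0, 1, 2, 0, 1, 2, 1, 0;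
     3, 4, 5, 3, 4, 5, 3, 4, 5, 3, 3;
     3, 4, 5, 3, 4, 5, 3, 4, 5, 3, 3;
     3, 4, 5, 3, 4, 5, 3, 4, 5, 4, 3;
     6, 7, 8, 6, 7, 8, 6, 7, 8, 6, 6;
     6, 7, 8, 6, 7, 8, 6, 7, 8, 6, 6;
     6, 7, 8, 6, 7, 8, 6, 7, 8, 7, 6;
     0, 1, 2, 0, 1, 2, 0, 1, 2, 0, 0;
     0, 1, 2, 0, 1, 2, 3, 4, 5, 0, 0] a b

instance grbSemigroup : Semigroup (Fin 11) where
  mul := grbTable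
  mul_assoc := by decide

theorem stmt_15 :
    ∃ (S : Type) (_ : Semigroup S) (_ : Fintype S),
      Fintype.card S = 11 ∧
      (∀ x y z : S, x * y * z * x * y = x * y) ∧
      (∀ x y : S, x * y * y = x * y ∨ y * y * x = y * x) ∧
      (∃ x y z u w : S, x * y * z ≠ x * y * w * z ∧ x * y * z ≠ x * u * y * z) := by
  refine ⟨Fin 11, grbSemigroup, inferInstance, by decide, by decide, by decide, 10, 0, 9, 6, 2, by decide, by decide⟩
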